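/- Partial derivatives are derivations of the Moyal–Weyl product: for every variable v ∈ Fin m ⊕ Fin m and all a, b ∈ A = MvPolynomial (Fin m ⊕ Fin m) (Polynomial ℂ), one has ∂_v(a ∘ b) = (∂_v a) ∘ b + a ∘ (∂_v b). -/

import Mathlib

open TensorProduct

noncomputable section

/-- The phase-space polynomial algebra `A = ℂ[ħ][q_1,…,q_m,p_1,…,p_m]`:
multivariate polynomials in the `2m` variables indexed by `Fin m ⊕ Fin m`
(where `Sum.inl i` indexes `q_i` and `Sum.inr i` indexes `p_i`) with
coefficients in `ℂ[ħ] = Polynomial ℂ`. -/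
abbrev PhaseAlg (m : ℕ) := MvPolynomial (Fin m ⊕ Fin m) (Polynomial ℂ)
instance instAddCommGroupPhaseAlg (m : ℕ) : AddCommGroup (PhaseAlg m) := inferInstance

/-- The Poisson bivector operator
`Π̂ = Σ_i (∂_{q_i} ⊗ ∂_{p_i} − ∂_{p_i} ⊗ ∂_{q_i})` on `A ⊗ A`. -/
def PiHat (m : ℕ) :
    PhaseAlg m ⊗[Polynomial ℂ] PhaseAlg m →ₗ[Polynomial ℂ]
      PhaseAlg m ⊗[Polynomial ℂ] PhaseAlg m :=
  ∑ i : Fin m,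
    ((TensorProduct.map (MvPolynomial.pderiv (Sum.inl i)).toLinearMap
        (MvPolynomial.pderiv (Sum.inr i)).toLinearMap :
        PhaseAlg m ⊗[Polynomial ℂ] PhaseAlg m →ₗ[Polynomial ℂ]
          PhaseAlg m ⊗[Polynomial ℂ] PhaseAlg m)
      - (TensorProduct.map (MvPolynomial.pderiv (Sum.inr i)).toLinearMap
        (MvPolynomial.pderiv (Sum.inl i)).toLinearMap :
        PhaseAlg m ⊗[Polynomial ℂ] PhaseAlg m →ₗ[Polynomial ℂ]
          PhaseAlg m ⊗[Polynomial ℂ] PhaseAlg m))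

/-- The Moyal--Weyl star product
`a ∘ b = Σ_{k ≥ 0} ((−iħ)^k / k!) · μ(Π̂^k(a ⊗ b))`; the sum is finite since
`Π̂^k (a ⊗ b) = 0` as soon as `k` exceeds the total degrees of `a` and `b`, so it
may be truncated at `k = totalDegree a + totalDegree b`. -/
def moyal {m : ℕ} (a b : PhaseAlg m) : PhaseAlg m :=
  ∑ k ∈ Finset.range (a.totalDegree + b.totalDegree + 1),
    ((k.factorial : ℂ)⁻¹ * (-Complex.I) ^ k) •
      (MvPolynomial.C (Polynomial.X ^ k) *
        LinearMap.mul' (Polynomial ℂ) (PhaseAlg m) ((PiHat m ^ k) (a ⊗ₜ[Polynomial ℂ] b)))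


open MvPolynomial

section Aux

variable {σ R : Type*} [CommSemiring R]

lemma my_pderiv_comm (i j : σ) (f : MvPolynomial σ R) :
    pderiv i (pderiv j f) = pderiv j (pderiv i f) := by
  classical
  induction f using MvPolynomial.induction_on' with
  | add p q hp hq => simp [hp, hq]
  | monomial s a =>
    by_cases hij : i = j
    · subst hij; rfl
    · simp only [pderiv_monomial]
      have h1 : (s - Finsupp.single j (1:ℕ)) i = s i := by
        simp [Finsupp.sub_apply, Finsupp.single_apply, Ne.symm hij]
      have h2 : (s - Finsupp.single i (1:ℕ)) j = s j := by
        simp [Finsupp.sub_apply, Finsupp.single_apply, hij]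
      rw [h1, h2, tsub_right_comm]
      ring_nf

lemma my_totalDegree_pderiv_le (i : σ) (f : MvPolynomial σ R) :
    (pderiv i f).totalDegree ≤ f.totalDegree := by
  classical
  conv_lhs => rw [← support_sum_monomial_coeff f]
  rw [map_sum]
  refine MvPolynomial.totalDegree_finsetSum_le fun s hs => ?_
  rw [pderiv_monomial]
  refine (totalDegree_monomial_le _ _).trans ?_
  refine le_trans ?_ (le_totalDegree hs)
  exact Finsupp.sum_le_sum_index tsub_le_self (fun _ _ => fun _ _ hle => hle) (fun _ _ => rfl)

lemma my_totalDegree_pderiv_lt (i : σ) (f : MvPolynomial σ R) {n : ℕ}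
    (h : f.totalDegree ≤ n + 1) : (pderiv i f).totalDegree ≤ n := by
  classical
  conv_lhs => rw [← support_sum_monomial_coeff f]
  rw [map_sum]
  refine MvPolynomial.totalDegree_finsetSum_le fun s hs => ?_
  rw [pderiv_monomial]
  by_cases hsi : s i = 0
  · simp [hsi]
  · refine (totalDegree_monomial_le _ _).trans ?_
    have hle : Finsupp.single i 1 ≤ s := by
      rw [Finsupp.single_le_iff]; omega
    have hrec : s - Finsupp.single i 1 + Finsupp.single i 1 = s := tsub_add_cancel_of_le hle
    have hsum : (s - Finsupp.single i 1).sum (fun _ n => n) + 1 = s.sum (fun _ n => n) := by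
      conv_rhs => rw [← hrec]
      rw [Finsupp.sum_add_index' (fun _ => rfl) (fun _ _ _ => rfl)]
      simp
    have hst := (le_totalDegree hs).trans h
    simp only [Function.id_def] at *
    omega

lemma pderiv_eq_zero_of_totalDegree_eq_zero (i : σ) (f : MvPolynomial σ R)
    (h : f.totalDegree = 0) : pderiv i f = 0 := by
  classical
  conv_lhs => rw [← support_sum_monomial_coeff f]
  rw [map_sum]
  refine Finset.sum_eq_zero fun s hs => ?_
  rw [pderiv_monomial, (totalDegree_eq_zero_iff σ f).mp h s hs i]
  simp

end Aux

variable {m : ℕ}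

/-- `∂_v ⊗ 1 + 1 ⊗ ∂_v` on `A ⊗ A`. -/
def Dv (m : ℕ) (v : Fin m ⊕ Fin m) :
    PhaseAlg m ⊗[Polynomial ℂ] PhaseAlg m →ₗ[Polynomial ℂ]
      PhaseAlg m ⊗[Polynomial ℂ] PhaseAlg m :=
  TensorProduct.map (pderiv v).toLinearMap LinearMap.id
    + TensorProduct.map LinearMap.id (pderiv v).toLinearMap

lemma Dv_tmul (v : Fin m ⊕ Fin m) (x y : PhaseAlg m) :
    Dv m v (x ⊗ₜ y) = (pderiv v x) ⊗ₜ y + x ⊗ₜ (pderiv v y) := by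
  simp [Dv]

lemma mul'_Dv (v : Fin m ⊕ Fin m) :
    (pderiv v).toLinearMap ∘ₗ LinearMap.mul' (Polynomial ℂ) (PhaseAlg m)
      = LinearMap.mul' (Polynomial ℂ) (PhaseAlg m) ∘ₗ Dv m v :=
  TensorProduct.ext' fun x y => by
    simp only [LinearMap.comp_apply, LinearMap.mul'_apply, Dv, LinearMap.add_apply,
      TensorProduct.map_tmul, LinearMap.id_coe, id_eq, map_add, Derivation.coeFn_coe]
    rw [pderiv_mul]

lemma PiHat_tmul (x y : PhaseAlg m) :
    PiHat m (x ⊗ₜ y) = ∑ i : Fin m,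
      ((pderiv (Sum.inl i) x) ⊗ₜ (pderiv (Sum.inr i) y)
        - (pderiv (Sum.inr i) x) ⊗ₜ (pderiv (Sum.inl i) y)) := by
  simp [PiHat, LinearMap.sum_apply]

lemma Dv_PiHat_comm (v : Fin m ⊕ Fin m) : Commute (Dv m v) (PiHat m) := by
  refine TensorProduct.ext' fun x y => ?_
  show Dv m v (PiHat m (x ⊗ₜ y)) = PiHat m (Dv m v (x ⊗ₜ y))
  rw [PiHat_tmul, Dv_tmul, map_sum, map_add, PiHat_tmul, PiHat_tmul, ← Finset.sum_add_distrib]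
  refine Finset.sum_congr rfl fun i _ => ?_
  rw [map_sub, Dv_tmul, Dv_tmul, my_pderiv_comm v (Sum.inl i) x, my_pderiv_comm v (Sum.inr i) x,
    my_pderiv_comm v (Sum.inl i) y, my_pderiv_comm v (Sum.inr i) y]
  abel

def Slev (m n : ℕ) : Submodule (Polynomial ℂ) (PhaseAlg m ⊗[Polynomial ℂ] PhaseAlg m) :=
  Submodule.span (Polynomial ℂ)
    {x | ∃ u w : PhaseAlg m, u.totalDegree ≤ n ∧ x = u ⊗ₜ w}

lemma PiHat_Slev_succ {n : ℕ} {x} (hx : x ∈ Slev m (n + 1)) : PiHat m x ∈ Slev m n := by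
  induction hx using Submodule.span_induction with
  | mem x hx =>
    obtain ⟨u, w, hu, rfl⟩ := hx
    rw [PiHat_tmul]
    refine Submodule.sum_mem _ fun i _ => Submodule.sub_mem _ ?_ ?_ <;>
      exact Submodule.subset_span ⟨_, _, my_totalDegree_pderiv_lt _ _ hu, rfl⟩
  | zero => simp
  | add x y _ _ hx hy => rw [map_add]; exact Submodule.add_mem _ hx hy
  | smul c x _ hx => rw [map_smul]; exact Submodule.smul_mem _ _ hx

lemma PiHat_Slev_zero {x} (hx : x ∈ Slev m 0) : PiHat m x = 0 := by
  induction hx using Submodule.span_induction with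
  | mem x hx =>
    obtain ⟨u, w, hu, rfl⟩ := hx
    rw [PiHat_tmul]
    refine Finset.sum_eq_zero fun i _ => ?_
    rw [pderiv_eq_zero_of_totalDegree_eq_zero _ _ (Nat.le_zero.mp hu),
      pderiv_eq_zero_of_totalDegree_eq_zero _ _ (Nat.le_zero.mp hu)]
    simp
  | zero => simp
  | add x y _ _ hx hy => rw [map_add, hx, hy, add_zero]
  | smul c x _ hx => rw [map_smul, hx, smul_zero]

lemma PiHat_pow_Slev {n : ℕ} : ∀ {x}, x ∈ Slev m n → (PiHat m ^ (n + 1)) x = 0 := by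
  induction n with
  | zero => intro x hx; rw [pow_one]; exact PiHat_Slev_zero hx
  | succ n ih =>
    intro x hx
    rw [pow_succ]
    exact (Module.End.mul_apply _ _ _).trans (ih (PiHat_Slev_succ hx))

lemma PiHat_pow_eq_zero {k : ℕ} (a b : PhaseAlg m) (h : a.totalDegree < k) :
    (PiHat m ^ k) (a ⊗ₜ[Polynomial ℂ] b) = 0 := by
  obtain ⟨r, rfl⟩ : ∃ r, k = r + (a.totalDegree + 1) := ⟨k - (a.totalDegree + 1), by omega⟩
  rw [pow_add, Module.End.mul_apply,
    PiHat_pow_Slev (Submodule.subset_span ⟨a, b, le_rfl, rfl⟩), map_zero]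

lemma moyal_eq_sum (a b : PhaseAlg m) (N : ℕ) (h : a.totalDegree + b.totalDegree + 1 ≤ N) :
    moyal a b = ∑ k ∈ Finset.range N,
      ((k.factorial : ℂ)⁻¹ * (-Complex.I) ^ k) •
        (MvPolynomial.C (Polynomial.X ^ k) *
          LinearMap.mul' (Polynomial ℂ) (PhaseAlg m) ((PiHat m ^ k) (a ⊗ₜ[Polynomial ℂ] b))) := by
  rw [moyal]
  refine Finset.sum_subset (Finset.range_subset_range.mpr h) fun k _ hk => ?_
  rw [Finset.mem_range, not_lt] at hk
  rw [PiHat_pow_eq_zero a b (by omega)]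
  simp

/-- Partial derivatives are derivations of the Moyal--Weyl product. -/
theorem pderiv_moyal (m : ℕ) (v : Fin m ⊕ Fin m) (a b : PhaseAlg m) :
    MvPolynomial.pderiv v (moyal a b) =
      moyal (MvPolynomial.pderiv v a) b + moyal a (MvPolynomial.pderiv v b) := by
  set N := a.totalDegree + b.totalDegree + 1 with hN
  have ha := my_totalDegree_pderiv_le v a
  have hb := my_totalDegree_pderiv_le v b
  rw [moyal_eq_sum a b N le_rfl, moyal_eq_sum _ b N (by omega), moyal_eq_sum a _ N (by omega),
    map_sum, ← Finset.sum_add_distrib]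
  refine Finset.sum_congr rfl fun k _ => ?_
  have hsmul : ∀ (c : ℂ) (x : PhaseAlg m), pderiv v (c • x) = c • pderiv v x := fun c x => by
    rw [algebra_compatible_smul (Polynomial ℂ) c x, Derivation.map_smul,
      ← algebra_compatible_smul (Polynomial ℂ) c]
  rw [hsmul, pderiv_C_mul]
  have h1 : pderiv v (LinearMap.mul' (Polynomial ℂ) (PhaseAlg m)
      ((PiHat m ^ k) (a ⊗ₜ[Polynomial ℂ] b)))
      = LinearMap.mul' (Polynomial ℂ) (PhaseAlg m) (Dv m v ((PiHat m ^ k) (a ⊗ₜ b))) :=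
    LinearMap.congr_fun (mul'_Dv v) _
  have h2 : Dv m v ((PiHat m ^ k) (a ⊗ₜ[Polynomial ℂ] b))
      = (PiHat m ^ k) (Dv m v (a ⊗ₜ b)) := by
    have := LinearMap.congr_fun (((Dv_PiHat_comm v).pow_right k).eq) (a ⊗ₜ[Polynomial ℂ] b)
    simpa [Module.End.mul_apply] using this
  rw [h1, h2, Dv_tmul, map_add, map_add, mul_add, smul_add]


end
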